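/- Compatibility of erasure orders: let t be a labeled binary tree of size n and, for 2 ≤ ℓ ≤ n, let t^ℓ be the unary-binary subtree spanned by the leaves labeled {0,1,...,ℓ}. If b_1^ℓ ≺ b_2^ℓ ≺ ... ≺ b_{ℓ−1}^ℓ is the order in which the branching nodes of t^ℓ are removed by iterated best-of-three erasure of t^ℓ, and ≺_t is the removal order of the branching nodes of t under iterated best-of-three erasure of t, then b_i^ℓ ≺_t b_{i+1}^ℓ for all 1 ≤ i ≤ ℓ−2. -/

import Mathlib

/-- A plane binary tree whose non-root leaves carry natural-number labels.
The root leaf (always labeled 0) is left implicit: an `LTree` is the part of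
the tree above the unique edge incident to the root. -/
inductive LTree where
  | leaf : ℕ → LTree
  | node : LTree → LTree → LTree
deriving DecidableEq

namespace LTree

/-- The size: number of branching (degree-3) nodes. -/
def size : LTree → ℕ
  | leaf _ => 0
  | node l r => size l + size r + 1

/-- The list of labels of the (non-root) leaves, left to right. -/
def labs : LTree → List ℕ
  | leaf a => [a]
  | node l r => labs l ++ labs r

/-- `t` is a labeled binary tree of size `n`: it has `n` branching nodes and its
`n+1` non-root leaves are bijectively labeled by `{1,…,n+1}` (the root leaf gets 0). -/
def IsLab (n : ℕ) (t : LTree) : Prop :=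
  size t = n ∧ List.Perm (labs t) ((List.range (n + 1)).map (· + 1))

/-- Number of elements of `L` strictly smaller than `x`. -/
def rank (L : List ℕ) (x : ℕ) : ℕ := L.countP (fun y => decide (y < x))

/-- Best-of-three comparison at a branching node with children `l`, `r`:
`true` iff at least two of the three minimally-labeled leaves of the fringe set
lie in the left child `l`. -/
def goLeft (l r : LTree) : Bool :=
  decide (2 ≤ (labs l).countP (fun x => decide (rank (labs l ++ labs r) x < 3)))

/-- The branching node selected by the best-of-three procedure (returned as the
fringe subtree rooted at it). -/
def botSel : LTree → LTree
  | leaf a => leaf a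
  | node (leaf a) (leaf b) => node (leaf a) (leaf b)
  | node l r => if goLeft l r then botSel l else botSel r

/-- The number of moves performed by the best-of-three selection. -/
def botDepth : LTree → ℕ
  | leaf _ => 0
  | node (leaf _) (leaf _) => 0
  | node l r => (if goLeft l r then botDepth l else botDepth r) + 1

/-- The position (sequence of left/right moves, `false` = left) of the selected node. -/
def botPos : LTree → List Bool
  | leaf _ => []
  | node (leaf _) (leaf _) => []
  | node l r => if goLeft l r then false :: botPos l else true :: botPos r

/-- Cut at the selected node: the two sibling leaves above it are removed, the
node becomes a leaf carrying the smaller label; returns the cut tree together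
with the erased (BoT) label, i.e. the larger of the two. -/
def botCut : LTree → LTree × ℕ
  | leaf a => (leaf a, 0)
  | node (leaf a) (leaf b) => (leaf (min a b), max a b)
  | node l r =>
    if goLeft l r then (node (botCut l).1 r, (botCut l).2)
    else (node l (botCut r).1, (botCut r).2)

/-- Relabel increasingly after erasing label `j`. -/
def relabel (j : ℕ) : LTree → LTree
  | leaf a => leaf (if a < j then a else a - 1)
  | node l r => node (relabel j l) (relabel j r)

/-- The label of the Best-of-Three leaf. -/
def botLabel (t : LTree) : ℕ := (botCut t).2

/-- Best-of-three erasure, including the increasing relabeling. -/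
def botErase (t : LTree) : LTree := relabel (botCut t).2 (botCut t).1

/-- Positions (in the original coordinates of `t`) of the branching nodes cut by
`k` successive best-of-three erasures, in order of erasure. -/
def eraseList : ℕ → LTree → List (List Bool)
  | 0, _ => []
  | k + 1, t => botPos t :: eraseList k (botErase t)

/-- The fringe subtree at a position (`false` = left child, `true` = right child). -/
def subAt : LTree → List Bool → Option LTree
  | t, [] => some t
  | leaf _, _ :: _ => none
  | node l _, false :: p => subAt l p
  | node _ r, true :: p => subAt r p

/-- Shift labels `≥ j` up by one, freeing the label `j`. -/
def relabelUp (j : ℕ) : LTree → LTree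
  | leaf a => leaf (if a < j then a else a + 1)
  | node l r => node (relabelUp j l) (relabelUp j r)

/-- Graft a new leaf labeled `j` to the left (`side = false`) or right
(`side = true`) of the leaf labeled `w`. -/
def graft (w j : ℕ) (side : Bool) : LTree → LTree
  | leaf a =>
    if a = w then (if side then node (leaf a) (leaf j) else node (leaf j) (leaf a))
    else leaf a
  | node l r => node (graft w j side l) (graft w j side r)

/-- The binary tree obtained from the `ℓ`-span (the unary–binary subtree spanned by
the root and the leaves labeled `1,…,ℓ`) by contracting its degree-2 vertices. -/
def trim (ℓ : ℕ) : LTree → LTree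
  | leaf a => leaf a
  | node l r =>
    if (labs l).all (fun x => decide (ℓ < x)) then trim ℓ r
    else if (labs r).all (fun x => decide (ℓ < x)) then trim ℓ l
    else node (trim ℓ l) (trim ℓ r)

/-- Map a position in `trim ℓ t` back to the corresponding position in `t`. -/
def trimPos (ℓ : ℕ) : LTree → List Bool → List Bool
  | leaf _, p => p
  | node l r, p =>
    if (labs l).all (fun x => decide (ℓ < x)) then true :: trimPos ℓ r p
    else if (labs r).all (fun x => decide (ℓ < x)) then false :: trimPos ℓ l p
    else
      match p with
      | [] => []
      | true :: q => true :: trimPos ℓ r q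
      | false :: q => false :: trimPos ℓ l q

end LTree

namespace LTree

theorem length_labs (t : LTree) : (labs t).length = size t + 1 := by
  induction t with
  | leaf a => simp [labs, size]
  | node l r ihl ihr => simp [labs, size, ihl, ihr]; omega

theorem labs_ne_nil (t : LTree) : labs t ≠ [] := by
  intro h
  have := length_labs t
  rw [h] at this; simp at this

theorem size_relabel (j : ℕ) (t : LTree) : size (relabel j t) = size t := by
  induction t with
  | leaf a => simp [relabel, size]
  | node l r ihl ihr => simp [relabel, size, ihl, ihr]

theorem labs_relabel (j : ℕ) (t : LTree) :
    labs (relabel j t) = (labs t).map (fun a => if a < j then a else a - 1) := by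
  induction t with
  | leaf a => simp [relabel, labs]
  | node l r ihl ihr => simp [relabel, labs, ihl, ihr]

theorem subAt_relabel (j : ℕ) (t : LTree) (p : List Bool) :
    subAt (relabel j t) p = Option.map (relabel j) (subAt t p) := by
  induction t generalizing p with
  | leaf a => cases p with
    | nil => simp [subAt, relabel]
    | cons b q => simp [relabel, subAt]
  | node l r ihl ihr =>
    cases p with
    | nil => simp [subAt, relabel]
    | cons b q => cases b <;> simp [relabel, subAt, ihl, ihr]

/-- `p` points to a branching node of `t`. -/
def IsBr (t : LTree) (p : List Bool) : Prop := ∃ l r, subAt t p = some (node l r)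

theorem isBr_relabel {j : ℕ} {t : LTree} {p : List Bool} :
    IsBr (relabel j t) p ↔ IsBr t p := by
  unfold IsBr
  rw [subAt_relabel]
  constructor
  · rintro ⟨l, r, h⟩
    cases hs : subAt t p with
    | none => rw [hs] at h; simp at h
    | some u =>
      rw [hs] at h; simp at h
      cases u with
      | leaf a => simp [relabel] at h
      | node a b => exact ⟨a, b, rfl⟩
  · rintro ⟨l, r, h⟩
    rw [h]
    exact ⟨relabel j l, relabel j r, rfl⟩

theorem not_isBr_leaf (a : ℕ) (p : List Bool) : ¬ IsBr (leaf a) p := by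
  rintro ⟨l, r, h⟩
  cases p with
  | nil => simp [subAt] at h
  | cons b q => simp [subAt] at h

/-- Generic facts about `botCut` / `botPos` on non-cherry nodes. -/
theorem goLeft_eq_false_of_leaf_left (a : ℕ) (r : LTree) :
    goLeft (leaf a) r = false := by
  simp only [goLeft, decide_eq_false_iff_not]
  intro h
  have : ((labs (leaf a)).countP fun x => decide (rank (labs (leaf a) ++ labs r) x < 3)) ≤ 1 := by
    calc ((labs (leaf a)).countP _) ≤ (labs (leaf a)).length := List.countP_le_length
    _ = 1 := by simp [labs]
  omega

end LTree

namespace LTree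

theorem exists_min_perm : ∀ (L : List ℕ), L ≠ [] → ∃ m L', L.Perm (m :: L') ∧ ∀ y ∈ L', m ≤ y := by
  intro L
  induction L with
  | nil => simp
  | cons x L ih =>
    intro _
    rcases L with _ | ⟨z, L0⟩
    · exact ⟨x, [], List.Perm.refl _, by simp⟩
    · obtain ⟨m, L', hp, hm⟩ := ih (by simp)
      by_cases hx : x ≤ m
      · refine ⟨x, z :: L0, List.Perm.refl _, ?_⟩
        intro y hy
        have : y ∈ m :: L' := hp.mem_iff.mp hy
        rw [List.mem_cons] at this
        rcases this with h | h
        · omega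
        · exact le_trans hx (hm y h)
      · refine ⟨m, x :: L', ?_, ?_⟩
        · exact (hp.cons x).trans (List.Perm.swap _ _ _)
        · intro y hy
          rw [List.mem_cons] at hy
          rcases hy with h|h
          · omega
          · exact hm y h

theorem rank_perm {L L' : List ℕ} (h : L.Perm L') (x : ℕ) : rank L x = rank L' x :=
  h.countP_eq _

theorem three_le_count_rank {F : List ℕ} (h : 3 ≤ F.length) :
    3 ≤ F.countP (fun x => decide (rank F x < 3)) := by
  obtain ⟨m1, F1, hp1, hm1⟩ := exists_min_perm F (by intro hF; rw [hF] at h; simp at h)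
  have hF1 : F1 ≠ [] := by
    intro hF1; rw [hF1] at hp1; have := hp1.length_eq; simp at this; omega
  obtain ⟨m2, F2, hp2, hm2⟩ := exists_min_perm F1 hF1
  have hF2 : F2 ≠ [] := by
    intro hF2; rw [hF2] at hp2
    have := (hp1.trans (hp2.cons m1)).length_eq; simp at this; omega
  obtain ⟨m3, F3, hp3, hm3⟩ := exists_min_perm F2 hF2
  have hP : F.Perm (m1 :: m2 :: m3 :: F3) :=
    hp1.trans ((hp2.trans (hp3.cons m2)).cons m1)
  have h12 : m1 ≤ m2 := hm1 m2 (hp2.mem_iff.mpr (by simp))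
  have h13 : m1 ≤ m3 := hm1 m3 (hp2.mem_iff.mpr (by simp [hp3.mem_iff.mpr (List.mem_cons_self)]))
  have h23 : m2 ≤ m3 := hm2 m3 (hp3.mem_iff.mpr (by simp))
  have hF3 : ∀ y ∈ F3, m3 ≤ y := hm3
  have hmem : ∀ y ∈ (m1 :: m2 :: m3 :: F3), m1 ≤ y := by
    intro y hy
    simp only [List.mem_cons] at hy
    rcases hy with rfl | rfl | rfl | hy
    · omega
    · omega
    · omega
    · exact le_trans h13 (hF3 y hy)
  have hr1 : rank F m1 = 0 := by
    rw [rank_perm hP]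
    unfold rank
    rw [List.countP_eq_zero]
    intro y hy
    simp only [decide_eq_true_eq, not_lt]
    exact hmem y hy
  have e2 : (m2 :: m3 :: F3).countP (fun y => decide (y < m2)) = 0 := by
    rw [List.countP_eq_zero]
    intro y hy
    simp only [decide_eq_true_eq, not_lt]
    simp only [List.mem_cons] at hy
    rcases hy with rfl | rfl | hy
    · omega
    · omega
    · exact le_trans h23 (hF3 y hy)
  have hr2 : rank F m2 ≤ 1 := by
    rw [rank_perm hP]
    unfold rank
    rw [List.countP_cons, e2]
    simp only [decide_eq_true_eq]
    split_ifs <;> omega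
  have e3 : F3.countP (fun y => decide (y < m3)) = 0 := by
    rw [List.countP_eq_zero]
    intro y hy
    simp only [decide_eq_true_eq, not_lt]
    exact hF3 y hy
  have hr3 : rank F m3 ≤ 2 := by
    rw [rank_perm hP]
    unfold rank
    rw [List.countP_cons, List.countP_cons, List.countP_cons, e3]
    simp only [decide_eq_true_eq]
    split_ifs <;> omega
  rw [hP.countP_eq]
  rw [List.countP_cons, List.countP_cons, List.countP_cons]
  have c1 : (decide (rank F m1 < 3)) = true := decide_eq_true (by omega)
  have c2 : (decide (rank F m2 < 3)) = true := decide_eq_true (by omega)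
  have c3 : (decide (rank F m3 < 3)) = true := decide_eq_true (by omega)
  rw [c1, c2, c3]
  norm_num

theorem goLeft_eq_true_of_leaf_right (l1 l2 : LTree) (b : ℕ) :
    goLeft (node l1 l2) (leaf b) = true := by
  simp only [goLeft, decide_eq_true_eq]
  set F := labs (node l1 l2) ++ labs (leaf b) with hF
  have hlen : 3 ≤ F.length := by
    have h1 := length_labs (node l1 l2)
    simp only [hF, List.length_append]
    simp [size, labs] at h1 ⊢
    omega
  have h3 := three_le_count_rank hlen
  rw [hF, List.countP_append] at h3
  have hb : (labs (leaf b)).countP (fun x => decide (rank F x < 3)) ≤ 1 := by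
    calc _ ≤ (labs (leaf b)).length := List.countP_le_length
      _ = 1 := by simp [labs]
  rw [← hF] at h3
  omega

end LTree

namespace LTree

theorem botCut_main : ∀ t : LTree, 1 ≤ size t →
    (∀ p : ℕ → Bool,
      (labs (botCut t).1).countP p + (if p (botCut t).2 then 1 else 0) = (labs t).countP p)
    ∧ (∃ x ∈ labs (botCut t).1, x ≤ (botCut t).2)
    ∧ size (botCut t).1 + 1 = size t
    ∧ (∃ a b, subAt t (botPos t) = some (node (leaf a) (leaf b)))
    ∧ (∃ c, subAt (botCut t).1 (botPos t) = some (leaf c))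
    ∧ (∀ q, IsBr (botCut t).1 q → IsBr t q) := by
  intro t
  induction t with
  | leaf a => intro h; simp [size] at h
  | node l r ihl ihr =>
    intro _
    cases l with
    | leaf a =>
      cases r with
      | leaf b =>
        -- cherry
        refine ⟨?_, ?_, ?_, ?_, ?_, ?_⟩
        · intro p
          rcases le_total a b with h | h
          · simp only [botCut, labs, Nat.min_eq_left h, Nat.max_eq_right h,
              List.countP_append, List.countP_cons, List.countP_nil]
            split_ifs <;> omega
          · simp only [botCut, labs, Nat.min_eq_right h, Nat.max_eq_left h,
              List.countP_append, List.countP_cons, List.countP_nil]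
            split_ifs <;> omega
        · have hc : (botCut (node (leaf a) (leaf b))) = (leaf (min a b), max a b) := by
            simp [botCut]
          rw [hc]
          exact ⟨min a b, by simp [labs], min_le_max⟩
        · simp [botCut, size]
        · exact ⟨a, b, by simp [botPos, subAt]⟩
        · exact ⟨min a b, by simp [botCut, botPos, subAt]⟩
        · intro q hq
          exfalso
          exact not_isBr_leaf _ _ (by simpa [botCut] using hq)
      | node r1 r2 =>
        -- left leaf, right node: goes right
        have hg : goLeft (leaf a) (node r1 r2) = false := goLeft_eq_false_of_leaf_left _ _
        have hcut : botCut (node (leaf a) (node r1 r2)) =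
            (node (leaf a) (botCut (node r1 r2)).1, (botCut (node r1 r2)).2) := by
          simp [botCut, hg]
        have hpos : botPos (node (leaf a) (node r1 r2)) = true :: botPos (node r1 r2) := by
          simp [botPos, hg]
        have hsz : 1 ≤ size (node r1 r2) := by simp [size]
        obtain ⟨ih1, ih2, ih3, ih4, ih5, ih6⟩ := ihr hsz
        refine ⟨?_, ?_, ?_, ?_, ?_, ?_⟩
        · intro p
          rw [hcut]
          simp only [labs, List.countP_append]
          have := ih1 p
          simp only [labs, List.countP_append] at this
          omega
        · obtain ⟨x, hx, hxle⟩ := ih2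
          rw [hcut]
          refine ⟨x, ?_, hxle⟩
          simp only [labs, List.mem_append]
          right
          exact hx
        · rw [hcut]
          simp only [size] at ih3 ⊢
          omega
        · obtain ⟨c, d, h⟩ := ih4
          exact ⟨c, d, by rw [hpos]; simpa [subAt] using h⟩
        · obtain ⟨c, h⟩ := ih5
          exact ⟨c, by rw [hcut, hpos]; simpa [subAt] using h⟩
        · intro q hq
          rw [hcut] at hq
          obtain ⟨u, v, hq⟩ := hq
          cases q with
          | nil => exact ⟨leaf a, node r1 r2, rfl⟩
          | cons b q' =>
            cases b with
            | false =>
              simp only [subAt] at hq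
              exact absurd ⟨u, v, hq⟩ (not_isBr_leaf _ _)
            | true =>
              simp only [subAt] at hq
              obtain ⟨u', v', h'⟩ := ih6 q' ⟨u, v, hq⟩
              exact ⟨u', v', by simpa [subAt] using h'⟩
    | node l1 l2 =>
      have hszl : 1 ≤ size (node l1 l2) := by simp [size]
      cases hgl : goLeft (node l1 l2) r with
      | true =>
        have hcut : botCut (node (node l1 l2) r) =
            (node (botCut (node l1 l2)).1 r, (botCut (node l1 l2)).2) := by
          cases r <;> simp [botCut, hgl]
        have hpos : botPos (node (node l1 l2) r) = false :: botPos (node l1 l2) := by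
          cases r <;> simp [botPos, hgl]
        obtain ⟨ih1, ih2, ih3, ih4, ih5, ih6⟩ := ihl hszl
        refine ⟨?_, ?_, ?_, ?_, ?_, ?_⟩
        · intro p
          rw [hcut]
          simp only [labs, List.countP_append]
          have := ih1 p
          simp only [labs, List.countP_append] at this
          omega
        · obtain ⟨x, hx, hxle⟩ := ih2
          rw [hcut]
          refine ⟨x, ?_, hxle⟩
          simp only [labs, List.mem_append]
          left
          exact hx
        · rw [hcut]
          simp only [size] at ih3 ⊢
          omega
        · obtain ⟨c, d, h⟩ := ih4
          exact ⟨c, d, by rw [hpos]; simpa [subAt] using h⟩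
        · obtain ⟨c, h⟩ := ih5
          exact ⟨c, by rw [hcut, hpos]; simpa [subAt] using h⟩
        · intro q hq
          rw [hcut] at hq
          obtain ⟨u, v, hq⟩ := hq
          cases q with
          | nil => exact ⟨node l1 l2, r, rfl⟩
          | cons b q' =>
            cases b with
            | true => exact ⟨u, v, by simpa [subAt] using hq⟩
            | false =>
              simp only [subAt] at hq
              obtain ⟨u', v', h'⟩ := ih6 q' ⟨u, v, hq⟩
              exact ⟨u', v', by simpa [subAt] using h'⟩
      | false =>
        have hr : ∃ r1 r2, r = node r1 r2 := by
          cases r with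
          | leaf b => exact absurd hgl (by simp [goLeft_eq_true_of_leaf_right])
          | node r1 r2 => exact ⟨r1, r2, rfl⟩
        obtain ⟨r1, r2, rfl⟩ := hr
        have hcut : botCut (node (node l1 l2) (node r1 r2)) =
            (node (node l1 l2) (botCut (node r1 r2)).1, (botCut (node r1 r2)).2) := by
          simp [botCut, hgl]
        have hpos : botPos (node (node l1 l2) (node r1 r2)) = true :: botPos (node r1 r2) := by
          simp [botPos, hgl]
        have hsz : 1 ≤ size (node r1 r2) := by simp [size]
        obtain ⟨ih1, ih2, ih3, ih4, ih5, ih6⟩ := ihr hsz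
        refine ⟨?_, ?_, ?_, ?_, ?_, ?_⟩
        · intro p
          rw [hcut]
          simp only [labs, List.countP_append]
          have := ih1 p
          simp only [labs, List.countP_append] at this
          omega
        · obtain ⟨x, hx, hxle⟩ := ih2
          rw [hcut]
          refine ⟨x, ?_, hxle⟩
          simp only [labs, List.mem_append]
          right
          exact hx
        · rw [hcut]
          simp only [size] at ih3 ⊢
          omega
        · obtain ⟨c, d, h⟩ := ih4
          exact ⟨c, d, by rw [hpos]; simpa [subAt] using h⟩
        · obtain ⟨c, h⟩ := ih5
          exact ⟨c, by rw [hcut, hpos]; simpa [subAt] using h⟩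
        · intro q hq
          rw [hcut] at hq
          obtain ⟨u, v, hq⟩ := hq
          cases q with
          | nil => exact ⟨node l1 l2, node r1 r2, rfl⟩
          | cons b q' =>
            cases b with
            | false => exact ⟨u, v, by simpa [subAt] using hq⟩
            | true =>
              simp only [subAt] at hq
              obtain ⟨u', v', h'⟩ := ih6 q' ⟨u, v, hq⟩
              exact ⟨u', v', by simpa [subAt] using h'⟩

end LTree

namespace LTree

theorem botLabel_mem {t : LTree} (ht : 1 ≤ size t) : (botCut t).2 ∈ labs t := by
  have h := (botCut_main t ht).1 (fun x => x == (botCut t).2)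
  simp only [beq_self_eq_true, if_pos] at h
  have : 0 < (labs t).countP (fun x => x == (botCut t).2) := by omega
  obtain ⟨x, hx, he⟩ := List.countP_pos_iff.mp this
  rwa [show x = (botCut t).2 from by simpa using he] at hx

theorem labs_botCut_perm {t : LTree} (ht : 1 ≤ size t) :
    (labs (botCut t).1).Perm ((labs t).erase (botCut t).2) := by
  rw [List.perm_iff_count]
  intro a
  rw [List.count_erase]
  rw [List.count_eq_countP, List.count_eq_countP]
  have h := (botCut_main t ht).1 (fun x => x == a)
  by_cases hja : (botCut t).2 = a
  · rw [if_pos (by simpa using hja)]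
    rw [hja] at h
    simp only [beq_self_eq_true, if_pos] at h
    omega
  · rw [if_neg (by simpa using hja)]
    have hfa : (((botCut t).2 == a)) = false := by simpa using hja
    rw [hfa] at h
    have h' : (labs (botCut t).1).countP (fun x => x == a) = (labs t).countP (fun x => x == a) := by
      simpa using h
    omega

theorem size_botErase {t : LTree} (ht : 1 ≤ size t) : size (botErase t) + 1 = size t := by
  rw [botErase, size_relabel]
  exact (botCut_main t ht).2.2.1

theorem length_eraseList (k : ℕ) : ∀ t, (eraseList k t).length = k := by
  induction k with
  | zero => intro t; simp [eraseList]
  | succ k ih => intro t; simp [eraseList, ih]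

theorem isBr_eraseList {k : ℕ} : ∀ {t : LTree}, k ≤ size t → ∀ q ∈ eraseList k t, IsBr t q := by
  induction k with
  | zero => intro t _ q hq; simp [eraseList] at hq
  | succ k ih =>
    intro t hk q hq
    have ht : 1 ≤ size t := by omega
    simp only [eraseList, List.mem_cons] at hq
    rcases hq with rfl | hq
    · obtain ⟨a, b, h⟩ := (botCut_main t ht).2.2.2.1
      exact ⟨leaf a, leaf b, h⟩
    · have hsz : k ≤ size (botErase t) := by have := size_botErase ht; omega
      have h1 : IsBr (botErase t) q := ih hsz q hq
      have h2 : IsBr (botCut t).1 q := isBr_relabel.mp h1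
      exact (botCut_main t ht).2.2.2.2.2 q h2

theorem nodup_eraseList {k : ℕ} : ∀ {t : LTree}, k ≤ size t → (eraseList k t).Nodup := by
  induction k with
  | zero => intro t _; simp [eraseList]
  | succ k ih =>
    intro t hk
    have ht : 1 ≤ size t := by omega
    have hsz : k ≤ size (botErase t) := by have := size_botErase ht; omega
    rw [eraseList, List.nodup_cons]
    refine ⟨?_, ih hsz⟩
    intro hmem
    have hbr : IsBr (botCut t).1 (botPos t) := isBr_relabel.mp (isBr_eraseList hsz _ hmem)
    obtain ⟨c, hc⟩ := (botCut_main t ht).2.2.2.2.1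
    obtain ⟨u, v, huv⟩ := hbr
    rw [hc] at huv
    simp at huv

theorem nodup_labs {n : ℕ} {t : LTree} (h : IsLab n t) : (labs t).Nodup := by
  refine h.2.nodup_iff.mpr ?_
  exact List.nodup_range.map (fun a b => by omega)

theorem isLab_size {n : ℕ} {t : LTree} (h : IsLab n t) : size t = n := h.1

theorem mem_labs_iff {n : ℕ} {t : LTree} (h : IsLab n t) {a : ℕ} :
    a ∈ labs t ↔ 1 ≤ a ∧ a ≤ n + 1 := by
  rw [h.2.mem_iff]
  simp only [List.mem_map, List.mem_range]
  constructor
  · rintro ⟨i, hi, rfl⟩; omega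
  · rintro ⟨h1, h2⟩; exact ⟨a - 1, by omega, by omega⟩

theorem isLab_botErase {n : ℕ} {t : LTree} (h : IsLab n t) (hn : 1 ≤ n) :
    IsLab (n - 1) (botErase t) := by
  have ht : 1 ≤ size t := by rw [h.1]; exact hn
  set j := (botCut t).2 with hj
  have hjm : j ∈ labs t := botLabel_mem ht
  have hjb : 1 ≤ j ∧ j ≤ n + 1 := (mem_labs_iff h).mp hjm
  constructor
  · have := size_botErase ht
    have h1 := h.1
    omega
  · rw [botErase, labs_relabel]
    have hperm : (labs (botCut t).1).Perm ((labs t).erase j) := labs_botCut_perm ht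
    have hperm2 : ((labs t).erase j).Perm (((List.range (n + 1)).map (· + 1)).erase j) :=
      h.2.erase j
    refine ((hperm.trans hperm2).map _).trans ?_
    -- now a concrete computation
    have hr : (List.range (n + 1)).map (· + 1) = List.range' 1 (n + 1) := by
      rw [List.range'_eq_map_range]
      apply List.map_congr_left
      intro a _
      omega
    rw [hr]
    have hsplit : List.range' 1 (n + 1) = List.range' 1 (j - 1) ++ j :: List.range' (j + 1) (n + 1 - j) := by
      have h1 : List.range' j (n + 2 - j) = j :: List.range' (j + 1) (n + 1 - j) := by
        have : n + 2 - j = (n + 1 - j) + 1 := by omega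
        rw [this, List.range'_succ]
      rw [← h1]
      have h2 := List.range'_append (s := 1) (m := j - 1) (n := n + 2 - j) (step := 1)
      simp only [one_mul] at h2
      rw [show 1 + (j - 1) = j from by omega] at h2
      rw [show j - 1 + (n + 2 - j) = n + 1 from by omega] at h2
      exact h2.symm
    rw [hsplit]
    rw [List.erase_append_right _ (by
      intro hmem
      rw [List.mem_range'_1] at hmem
      omega)]
    rw [List.erase_cons_head]
    rw [List.map_append]
    have hm1 : (List.range' 1 (j - 1)).map (fun a => if a < j then a else a - 1) =
        List.range' 1 (j - 1) := by
      rw [List.range'_eq_map_range, List.map_map]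
      apply List.map_congr_left
      intro a ha
      rw [List.mem_range] at ha
      simp only [Function.comp_apply]
      rw [if_pos (by omega)]
    have hm2 : (List.range' (j + 1) (n + 1 - j)).map (fun a => if a < j then a else a - 1) =
        List.range' j (n + 1 - j) := by
      rw [List.range'_eq_map_range, List.range'_eq_map_range, List.map_map]
      apply List.map_congr_left
      intro a _
      simp only [Function.comp_apply]
      rw [if_neg (by omega)]
      omega
    rw [hm1, hm2]
    have happ := List.range'_append (s := 1) (m := j - 1) (n := n + 1 - j) (step := 1)
    simp only [one_mul] at happ
    rw [show 1 + (j - 1) = j from by omega] at happ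
    rw [show j - 1 + (n + 1 - j) = n from by omega] at happ
    rw [happ]
    have hr2 : (List.range n).map (· + 1) = List.range' 1 n := by
      rw [List.range'_eq_map_range]
      apply List.map_congr_left
      intro a _
      omega
    rw [show n - 1 + 1 = n from by omega, hr2]

end LTree

namespace LTree

theorem all_congr_mem {α : Type*} {l : List α} {p q : α → Bool}
    (h : ∀ a ∈ l, p a = q a) : l.all p = l.all q := by
  induction l with
  | nil => rfl
  | cons x l ih =>
    simp only [List.all_cons, h x (by simp), ih (fun a ha => h a (by simp [ha]))]

theorem labs_trim {ℓ : ℕ} : ∀ {t : LTree}, (labs t).all (fun x => decide (ℓ < x)) = false →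
    labs (trim ℓ t) = (labs t).filter (fun x => !decide (ℓ < x)) := by
  intro t
  induction t with
  | leaf a =>
    intro h
    simp only [labs, List.all_cons, List.all_nil, Bool.and_true] at h
    simp [trim, labs, h]
  | node l r ihl ihr =>
    intro h
    simp only [labs, List.all_append, Bool.and_eq_false_iff] at h
    simp only [labs, List.filter_append]
    cases hl : (labs l).all (fun x => decide (ℓ < x)) with
    | true =>
      have hr : (labs r).all (fun x => decide (ℓ < x)) = false := by
        rcases h with h | h
        · rw [hl] at h; exact absurd h (by simp)
        · exact h
      rw [trim, if_pos hl, ihr hr]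
      have : (labs l).filter (fun x => !decide (ℓ < x)) = [] := by
        rw [List.filter_eq_nil_iff]
        intro a ha
        rw [List.all_eq_true] at hl
        simp [hl a ha]
      rw [this, List.nil_append]
    | false =>
      cases hr : (labs r).all (fun x => decide (ℓ < x)) with
      | true =>
        rw [trim, if_neg (by simp [hl]), if_pos hr, ihl hl]
        have : (labs r).filter (fun x => !decide (ℓ < x)) = [] := by
          rw [List.filter_eq_nil_iff]
          intro a ha
          rw [List.all_eq_true] at hr
          simp [hr a ha]
        rw [this, List.append_nil]
      | false =>
        rw [trim, if_neg (by simp [hl]), if_neg (by simp [hr])]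
        rw [labs, ihl hl, ihr hr]

theorem labs_trim_le {ℓ : ℕ} {t : LTree} (h : (labs t).all (fun x => decide (ℓ < x)) = false) :
    ∀ a ∈ labs (trim ℓ t), a ≤ ℓ := by
  intro a ha
  rw [labs_trim h] at ha
  have := List.of_mem_filter ha
  simpa using this

theorem relabel_eq_self {j : ℕ} : ∀ {t : LTree}, (∀ a ∈ labs t, a < j) → relabel j t = t := by
  intro t
  induction t with
  | leaf a => intro h; simp [relabel, (h a (by simp [labs])), labs]
  | node l r ihl ihr =>
    intro h
    simp only [labs, List.mem_append] at h
    rw [relabel, ihl (fun a ha => h a (Or.inl ha)), ihr (fun a ha => h a (Or.inr ha))]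

theorem allBig_relabel_gt {ℓ j : ℕ} (hj : ℓ < j) {t : LTree} (hm : j ∉ labs t) :
    (labs (relabel j t)).all (fun x => decide (ℓ < x)) =
      (labs t).all (fun x => decide (ℓ < x)) := by
  rw [labs_relabel, List.all_map]
  apply all_congr_mem
  intro a ha
  have haj : a ≠ j := fun h => hm (h ▸ ha)
  simp only [Function.comp_apply]
  by_cases h : a < j
  · rw [if_pos h]
  · rw [if_neg h, decide_eq_true (show ℓ < a - 1 by omega), decide_eq_true (show ℓ < a by omega)]

theorem allBig_relabel_le {ℓ j : ℕ} (hj : j ≤ ℓ) (hj1 : 1 ≤ j) {t : LTree} (hm : j ∉ labs t) :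
    (labs (relabel j t)).all (fun x => decide (ℓ - 1 < x)) =
      (labs t).all (fun x => decide (ℓ < x)) := by
  rw [labs_relabel, List.all_map]
  apply all_congr_mem
  intro a ha
  have haj : a ≠ j := fun h => hm (h ▸ ha)
  simp only [Function.comp_apply]
  by_cases h : a < j
  · rw [if_pos h, decide_eq_false (show ¬ (ℓ - 1 < a) by omega),
      decide_eq_false (show ¬ (ℓ < a) by omega)]
  · rw [if_neg h]
    by_cases h2 : ℓ < a
    · rw [decide_eq_true (show ℓ - 1 < a - 1 by omega), decide_eq_true h2]
    · rw [decide_eq_false (show ¬ (ℓ - 1 < a - 1) by omega), decide_eq_false h2]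

theorem trim_relabel_gt {ℓ j : ℕ} (hj : ℓ < j) : ∀ {t : LTree}, j ∉ labs t →
    trim ℓ (relabel j t) = relabel j (trim ℓ t) := by
  intro t
  induction t with
  | leaf a => intro _; simp [relabel, trim]
  | node l r ihl ihr =>
    intro hm
    simp only [labs, List.mem_append, not_or] at hm
    rw [relabel, trim, trim, allBig_relabel_gt hj hm.1, allBig_relabel_gt hj hm.2]
    split_ifs with h1 h2
    · exact ihr hm.2
    · exact ihl hm.1
    · rw [relabel, ihl hm.1, ihr hm.2]

theorem trimPos_relabel_gt {ℓ j : ℕ} (hj : ℓ < j) : ∀ {t : LTree}, j ∉ labs t →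
    ∀ p, trimPos ℓ (relabel j t) p = trimPos ℓ t p := by
  intro t
  induction t with
  | leaf a => intro _ p; simp [relabel, trimPos]
  | node l r ihl ihr =>
    intro hm p
    simp only [labs, List.mem_append, not_or] at hm
    rw [relabel]
    simp only [trimPos]
    rw [allBig_relabel_gt hj hm.1, allBig_relabel_gt hj hm.2]
    split_ifs with h1 h2
    · rw [ihr hm.2]
    · rw [ihl hm.1]
    · cases p with
      | nil => rfl
      | cons b q => cases b <;> simp only [ihl hm.1, ihr hm.2]

theorem trim_relabel_le {ℓ j : ℕ} (hj : j ≤ ℓ) (hj1 : 1 ≤ j) : ∀ {t : LTree}, j ∉ labs t →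
    trim (ℓ - 1) (relabel j t) = relabel j (trim ℓ t) := by
  intro t
  induction t with
  | leaf a => intro _; simp [relabel, trim]
  | node l r ihl ihr =>
    intro hm
    simp only [labs, List.mem_append, not_or] at hm
    rw [relabel, trim, trim, allBig_relabel_le hj hj1 hm.1, allBig_relabel_le hj hj1 hm.2]
    split_ifs with h1 h2
    · exact ihr hm.2
    · exact ihl hm.1
    · rw [relabel, ihl hm.1, ihr hm.2]

theorem trimPos_relabel_le {ℓ j : ℕ} (hj : j ≤ ℓ) (hj1 : 1 ≤ j) : ∀ {t : LTree}, j ∉ labs t →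
    ∀ p, trimPos (ℓ - 1) (relabel j t) p = trimPos ℓ t p := by
  intro t
  induction t with
  | leaf a => intro _ p; simp [relabel, trimPos]
  | node l r ihl ihr =>
    intro hm p
    simp only [labs, List.mem_append, not_or] at hm
    rw [relabel]
    simp only [trimPos]
    rw [allBig_relabel_le hj hj1 hm.1, allBig_relabel_le hj hj1 hm.2]
    split_ifs with h1 h2
    · rw [ihr hm.2]
    · rw [ihl hm.1]
    · cases p with
      | nil => rfl
      | cons b q => cases b <;> simp only [ihl hm.1, ihr hm.2]

theorem allBig_botCut {ℓ : ℕ} {t : LTree} (ht : 1 ≤ size t) :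
    (labs (botCut t).1).all (fun x => decide (ℓ < x)) =
      (labs t).all (fun x => decide (ℓ < x)) := by
  cases h : (labs t).all (fun x => decide (ℓ < x)) with
  | true =>
    rw [List.all_eq_true] at h ⊢
    intro x hx
    have : x ∈ (labs t).erase (botCut t).2 := (labs_botCut_perm ht).mem_iff.mp hx
    exact h x (List.mem_of_mem_erase this)
  | false =>
    rw [List.all_eq_false] at h
    obtain ⟨x0, hx0, hx0p⟩ := h
    rw [List.all_eq_false]
    by_cases hjl : (botCut t).2 ≤ ℓ
    · obtain ⟨x, hx, hxle⟩ := (botCut_main t ht).2.1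
      exact ⟨x, hx, by simp; omega⟩
    · have hcount := (botCut_main t ht).1 (fun x => !decide (ℓ < x))
      have hjc : (!decide (ℓ < (botCut t).2)) = false := by simp; omega
      rw [hjc, if_neg Bool.false_ne_true] at hcount
      have hpos : 0 < (labs t).countP (fun x => !decide (ℓ < x)) := by
        rw [List.countP_pos_iff]
        exact ⟨x0, hx0, by simpa using hx0p⟩
      have hpos2 : 0 < (labs (botCut t).1).countP (fun x => !decide (ℓ < x)) := by omega
      obtain ⟨x, hx, hxp⟩ := List.countP_pos_iff.mp hpos2
      exact ⟨x, hx, by simpa using hxp⟩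

end LTree

namespace LTree

section helpers
variable {ℓ : ℕ} {l r : LTree}

theorem botCut_gl_true (hg : goLeft l r = true) :
    botCut (node l r) = (node (botCut l).1 r, (botCut l).2) := by
  cases l with
  | leaf a => exact absurd hg (by simp [goLeft_eq_false_of_leaf_left])
  | node l1 l2 => cases r <;> simp [botCut, hg]

theorem botPos_gl_true (hg : goLeft l r = true) :
    botPos (node l r) = false :: botPos l := by
  cases l with
  | leaf a => exact absurd hg (by simp [goLeft_eq_false_of_leaf_left])
  | node l1 l2 => cases r <;> simp [botPos, hg]

theorem botCut_gl_false {r1 r2 : LTree} (hg : goLeft l (node r1 r2) = false) :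
    botCut (node l (node r1 r2)) =
      (node l (botCut (node r1 r2)).1, (botCut (node r1 r2)).2) := by
  cases l <;> simp [botCut, hg]

theorem botPos_gl_false {r1 r2 : LTree} (hg : goLeft l (node r1 r2) = false) :
    botPos (node l (node r1 r2)) = true :: botPos (node r1 r2) := by
  cases l <;> simp [botPos, hg]

theorem trim_node_tt (hl : (labs l).all (fun x => decide (ℓ < x)) = true) :
    trim ℓ (node l r) = trim ℓ r := by
  rw [trim, if_pos hl]

theorem trim_node_ft (hl : (labs l).all (fun x => decide (ℓ < x)) = false)
    (hr : (labs r).all (fun x => decide (ℓ < x)) = true) :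
    trim ℓ (node l r) = trim ℓ l := by
  rw [trim, if_neg (by simp [hl]), if_pos hr]

theorem trim_node_ff (hl : (labs l).all (fun x => decide (ℓ < x)) = false)
    (hr : (labs r).all (fun x => decide (ℓ < x)) = false) :
    trim ℓ (node l r) = node (trim ℓ l) (trim ℓ r) := by
  rw [trim, if_neg (by simp [hl]), if_neg (by simp [hr])]

theorem trimPos_node_tt (hl : (labs l).all (fun x => decide (ℓ < x)) = true) (p : List Bool) :
    trimPos ℓ (node l r) p = true :: trimPos ℓ r p := by
  simp only [trimPos]
  rw [if_pos hl]

theorem trimPos_node_ft (hl : (labs l).all (fun x => decide (ℓ < x)) = false)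
    (hr : (labs r).all (fun x => decide (ℓ < x)) = true) (p : List Bool) :
    trimPos ℓ (node l r) p = false :: trimPos ℓ l p := by
  simp only [trimPos]
  rw [if_neg (by simp [hl]), if_pos hr]

theorem trimPos_node_ff_nil (hl : (labs l).all (fun x => decide (ℓ < x)) = false)
    (hr : (labs r).all (fun x => decide (ℓ < x)) = false) :
    trimPos ℓ (node l r) [] = [] := by
  simp only [trimPos]
  rw [if_neg (by simp [hl]), if_neg (by simp [hr])]

theorem trimPos_node_ff_false (hl : (labs l).all (fun x => decide (ℓ < x)) = false)
    (hr : (labs r).all (fun x => decide (ℓ < x)) = false) (q : List Bool) :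
    trimPos ℓ (node l r) (false :: q) = false :: trimPos ℓ l q := by
  simp only [trimPos]
  rw [if_neg (by simp [hl]), if_neg (by simp [hr])]

theorem trimPos_node_ff_true (hl : (labs l).all (fun x => decide (ℓ < x)) = false)
    (hr : (labs r).all (fun x => decide (ℓ < x)) = false) (q : List Bool) :
    trimPos ℓ (node l r) (true :: q) = true :: trimPos ℓ r q := by
  simp only [trimPos]
  rw [if_neg (by simp [hl]), if_neg (by simp [hr])]

theorem allBig_false_of_cut_small {t : LTree} (ht : 1 ≤ size t) (hj : (botCut t).2 ≤ ℓ) :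
    (labs t).all (fun x => decide (ℓ < x)) = false := by
  rw [List.all_eq_false]
  exact ⟨(botCut t).2, botLabel_mem ht, by simp; omega⟩

theorem countP_small_pos {t : LTree} (h : (labs t).all (fun x => decide (ℓ < x)) = false) :
    1 ≤ (labs t).countP (fun x => !decide (ℓ < x)) := by
  rw [List.all_eq_false] at h
  obtain ⟨x, hx, hxp⟩ := h
  exact List.countP_pos_iff.mpr ⟨x, hx, by simpa using hxp⟩

theorem countP_small_cut_ge {t : LTree} (ht : 1 ≤ size t) (hj : (botCut t).2 ≤ ℓ) :
    2 ≤ (labs t).countP (fun x => !decide (ℓ < x)) := by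
  have h := (botCut_main t ht).1 (fun x => !decide (ℓ < x))
  rw [if_pos (by simp; omega)] at h
  obtain ⟨x, hx, hxle⟩ := (botCut_main t ht).2.1
  have : 1 ≤ (labs (botCut t).1).countP (fun x => !decide (ℓ < x)) :=
    List.countP_pos_iff.mpr ⟨x, hx, by simp; omega⟩
  omega

theorem trim_node_of_two {t : LTree} (h2 : 2 ≤ (labs t).countP (fun x => !decide (ℓ < x)))
    (hc : (labs t).all (fun x => decide (ℓ < x)) = false) :
    ∃ A B, trim ℓ t = node A B := by
  cases h : trim ℓ t with
  | node A B => exact ⟨A, B, rfl⟩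
  | leaf c =>
    exfalso
    have := labs_trim hc
    rw [h] at this
    have hlen : ((labs t).filter (fun x => !decide (ℓ < x))).length = 1 := by
      rw [← this]; simp [labs]
    rw [← List.countP_eq_length_filter] at hlen
    omega

theorem rank_filter_small {ℓ : ℕ} {F : List ℕ} {x : ℕ} (hx : x ≤ ℓ) :
    rank (F.filter (fun y => !decide (ℓ < y))) x = rank F x := by
  unfold rank
  rw [List.countP_filter]
  apply List.countP_congr
  intro y _
  by_cases h : y < x
  · rw [decide_eq_true h, decide_eq_false (show ¬ (ℓ < y) by omega)]
    rfl
  · rw [decide_eq_false h]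
    rfl

theorem goLeft_trim {ℓ : ℕ} {l r : LTree}
    (hl : (labs l).all (fun x => decide (ℓ < x)) = false)
    (hr : (labs r).all (fun x => decide (ℓ < x)) = false)
    (h3 : 3 ≤ (labs l ++ labs r).countP (fun x => !decide (ℓ < x))) :
    goLeft (trim ℓ l) (trim ℓ r) = goLeft l r := by
  have hF' : labs (trim ℓ l) ++ labs (trim ℓ r) =
      (labs l ++ labs r).filter (fun x => !decide (ℓ < x)) := by
    rw [labs_trim hl, labs_trim hr, List.filter_append]
  have hc : List.countP (fun x => decide (rank (labs (trim ℓ l) ++ labs (trim ℓ r)) x < 3))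
        (labs (trim ℓ l))
      = List.countP (fun x => decide (rank (labs l ++ labs r) x < 3)) (labs l) := by
    rw [hF', labs_trim hl, List.countP_filter]
    apply List.countP_congr
    intro y hy
    by_cases hys : y ≤ ℓ
    · rw [rank_filter_small hys]
      have hsm : (!decide (ℓ < y)) = true := by simp; omega
      rw [hsm, Bool.and_true]
    · have h1 : (!decide (ℓ < y)) = false := by simp; omega
      rw [h1, Bool.and_false]
      have hrk : ¬ (rank (labs l ++ labs r) y < 3) := by
        have hmono : (labs l ++ labs r).countP (fun x => !decide (ℓ < x)) ≤
            (labs l ++ labs r).countP (fun z => decide (z < y)) := by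
          apply List.countP_mono_left
          intro x _ hx
          simp only [Bool.not_eq_true'] at hx
          rw [decide_eq_false_iff_not, not_lt] at hx
          rw [decide_eq_true_eq]
          omega
        unfold rank
        omega
      rw [decide_eq_false hrk]
  unfold goLeft
  rw [hc]

end helpers

end LTree

namespace LTree

theorem coreB {ℓ : ℕ} : ∀ t : LTree, 1 ≤ size t → (botCut t).2 ≤ ℓ →
    (botCut (trim ℓ t)).2 = (botCut t).2 ∧
    (botCut (trim ℓ t)).1 = trim ℓ (botCut t).1 ∧
    trimPos ℓ t (botPos (trim ℓ t)) = botPos t := by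
  intro t
  induction t with
  | leaf a => intro h; simp [size] at h
  | node l r ihl ihr =>
    intro _ hj
    cases l with
    | leaf a =>
      cases r with
      | leaf b =>
        have hab : max a b ≤ ℓ := by simpa [botCut] using hj
        have hca : (labs (leaf a)).all (fun x => decide (ℓ < x)) = false := by
          simp [labs]; omega
        have hcb : (labs (leaf b)).all (fun x => decide (ℓ < x)) = false := by
          simp [labs]; omega
        have htr : trim ℓ (node (leaf a) (leaf b)) = node (leaf a) (leaf b) := by
          rw [trim_node_ff hca hcb]; rfl
        refine ⟨by rw [htr], ?_, ?_⟩
        · rw [htr]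
          simp [botCut, trim]
        · rw [htr]
          show trimPos ℓ (node (leaf a) (leaf b)) [] = []
          rw [trimPos_node_ff_nil hca hcb]
      | node r1 r2 =>
        have hg : goLeft (leaf a) (node r1 r2) = false := goLeft_eq_false_of_leaf_left _ _
        have hjr : (botCut (node r1 r2)).2 ≤ ℓ := by
          rw [botCut_gl_false hg] at hj; exact hj
        have hszr : 1 ≤ size (node r1 r2) := by simp [size]
        obtain ⟨e1, e2, e3⟩ := ihr hszr hjr
        have hcr : (labs (node r1 r2)).all (fun x => decide (ℓ < x)) = false :=
          allBig_false_of_cut_small hszr hjr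
        have hcutr : (labs (botCut (node r1 r2)).1).all (fun x => decide (ℓ < x)) = false := by
          rw [allBig_botCut hszr]; exact hcr
        cases hca : (labs (leaf a)).all (fun x => decide (ℓ < x)) with
        | true =>
          have htr := trim_node_tt (r := node r1 r2) hca
          refine ⟨?_, ?_, ?_⟩
          · rw [htr, botCut_gl_false hg]; exact e1
          · rw [htr, botCut_gl_false hg, trim_node_tt hca]; exact e2
          · rw [htr, botPos_gl_false hg, trimPos_node_tt hca, e3]
        | false =>
          have h2r : 2 ≤ (labs (node r1 r2)).countP (fun x => !decide (ℓ < x)) :=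
            countP_small_cut_ge hszr hjr
          obtain ⟨A, B, hAB⟩ := trim_node_of_two h2r hcr
          have htr : trim ℓ (node (leaf a) (node r1 r2)) =
              node (leaf a) (trim ℓ (node r1 r2)) := by
            rw [trim_node_ff hca hcr]; rfl
          have hgf : goLeft (leaf a) (trim ℓ (node r1 r2)) = false := by
            rw [hAB]; exact goLeft_eq_false_of_leaf_left _ _
          have hcutT : botCut (node (leaf a) (trim ℓ (node r1 r2))) =
              (node (leaf a) (botCut (trim ℓ (node r1 r2))).1,
                (botCut (trim ℓ (node r1 r2))).2) := by
            rw [hAB] at hgf ⊢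
            exact botCut_gl_false hgf
          have hposT : botPos (node (leaf a) (trim ℓ (node r1 r2))) =
              true :: botPos (trim ℓ (node r1 r2)) := by
            rw [hAB] at hgf ⊢
            exact botPos_gl_false hgf
          refine ⟨?_, ?_, ?_⟩
          · rw [htr, hcutT, botCut_gl_false hg]; exact e1
          · rw [htr, hcutT, botCut_gl_false hg]
            show node (leaf a) (botCut (trim ℓ (node r1 r2))).1 =
              trim ℓ (node (leaf a) (botCut (node r1 r2)).1)
            rw [trim_node_ff hca hcutr, e2]
            rfl
          · rw [htr, hposT, botPos_gl_false hg, trimPos_node_ff_true hca hcr, e3]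
    | node l1 l2 =>
      have hszl : 1 ≤ size (node l1 l2) := by simp [size]
      cases r with
      | leaf b =>
        have hg : goLeft (node l1 l2) (leaf b) = true := goLeft_eq_true_of_leaf_right _ _ _
        have hjl : (botCut (node l1 l2)).2 ≤ ℓ := by
          rw [botCut_gl_true hg] at hj; exact hj
        obtain ⟨e1, e2, e3⟩ := ihl hszl hjl
        have hcl : (labs (node l1 l2)).all (fun x => decide (ℓ < x)) = false :=
          allBig_false_of_cut_small hszl hjl
        have hcutl : (labs (botCut (node l1 l2)).1).all (fun x => decide (ℓ < x)) = false := by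
          rw [allBig_botCut hszl]; exact hcl
        cases hcb : (labs (leaf b)).all (fun x => decide (ℓ < x)) with
        | true =>
          have htr := trim_node_ft (r := leaf b) hcl hcb
          refine ⟨?_, ?_, ?_⟩
          · rw [htr, botCut_gl_true hg]; exact e1
          · rw [htr, botCut_gl_true hg, trim_node_ft hcutl hcb]; exact e2
          · rw [htr, botPos_gl_true hg, trimPos_node_ft hcl hcb, e3]
        | false =>
          have h2l : 2 ≤ (labs (node l1 l2)).countP (fun x => !decide (ℓ < x)) :=
            countP_small_cut_ge hszl hjl
          obtain ⟨A, B, hAB⟩ := trim_node_of_two h2l hcl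
          have htr : trim ℓ (node (node l1 l2) (leaf b)) =
              node (trim ℓ (node l1 l2)) (leaf b) := by
            rw [trim_node_ff hcl hcb]; rfl
          have hgt : goLeft (trim ℓ (node l1 l2)) (leaf b) = true := by
            rw [hAB]; exact goLeft_eq_true_of_leaf_right _ _ _
          have hcutT : botCut (node (trim ℓ (node l1 l2)) (leaf b)) =
              (node (botCut (trim ℓ (node l1 l2))).1 (leaf b),
                (botCut (trim ℓ (node l1 l2))).2) := botCut_gl_true hgt
          have hposT : botPos (node (trim ℓ (node l1 l2)) (leaf b)) =
              false :: botPos (trim ℓ (node l1 l2)) := botPos_gl_true hgt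
          refine ⟨?_, ?_, ?_⟩
          · rw [htr, hcutT, botCut_gl_true hg]; exact e1
          · rw [htr, hcutT, botCut_gl_true hg]
            show node (botCut (trim ℓ (node l1 l2))).1 (leaf b) =
              trim ℓ (node (botCut (node l1 l2)).1 (leaf b))
            rw [trim_node_ff hcutl hcb, e2]
            rfl
          · rw [htr, hposT, botPos_gl_true hg, trimPos_node_ff_false hcl hcb, e3]
      | node r1 r2 =>
        have hszr : 1 ≤ size (node r1 r2) := by simp [size]
        cases hg : goLeft (node l1 l2) (node r1 r2) with
        | true =>
          have hjl : (botCut (node l1 l2)).2 ≤ ℓ := by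
            rw [botCut_gl_true hg] at hj; exact hj
          obtain ⟨e1, e2, e3⟩ := ihl hszl hjl
          have hcl : (labs (node l1 l2)).all (fun x => decide (ℓ < x)) = false :=
            allBig_false_of_cut_small hszl hjl
          have hcutl : (labs (botCut (node l1 l2)).1).all (fun x => decide (ℓ < x)) = false := by
            rw [allBig_botCut hszl]; exact hcl
          cases hcr : (labs (node r1 r2)).all (fun x => decide (ℓ < x)) with
          | true =>
            have htr := trim_node_ft (r := node r1 r2) hcl hcr
            refine ⟨?_, ?_, ?_⟩
            · rw [htr, botCut_gl_true hg]; exact e1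
            · rw [htr, botCut_gl_true hg, trim_node_ft hcutl hcr]; exact e2
            · rw [htr, botPos_gl_true hg, trimPos_node_ft hcl hcr, e3]
          | false =>
            have h2l : 2 ≤ (labs (node l1 l2)).countP (fun x => !decide (ℓ < x)) :=
              countP_small_cut_ge hszl hjl
            have h1r : 1 ≤ (labs (node r1 r2)).countP (fun x => !decide (ℓ < x)) :=
              countP_small_pos hcr
            have h3 : 3 ≤ (labs (node l1 l2) ++ labs (node r1 r2)).countP
                (fun x => !decide (ℓ < x)) := by
              rw [List.countP_append]; omega
            have hgt : goLeft (trim ℓ (node l1 l2)) (trim ℓ (node r1 r2)) = true := by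
              rw [goLeft_trim hcl hcr h3]; exact hg
            have htr := trim_node_ff (r := node r1 r2) hcl hcr
            have hcutT := botCut_gl_true hgt
            have hposT := botPos_gl_true hgt
            refine ⟨?_, ?_, ?_⟩
            · rw [htr, hcutT, botCut_gl_true hg]; exact e1
            · rw [htr, hcutT, botCut_gl_true hg]
              show node (botCut (trim ℓ (node l1 l2))).1 (trim ℓ (node r1 r2)) =
                trim ℓ (node (botCut (node l1 l2)).1 (node r1 r2))
              rw [trim_node_ff hcutl hcr, e2]
            · rw [htr, hposT, botPos_gl_true hg, trimPos_node_ff_false hcl hcr, e3]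
        | false =>
          have hjr : (botCut (node r1 r2)).2 ≤ ℓ := by
            rw [botCut_gl_false hg] at hj; exact hj
          obtain ⟨e1, e2, e3⟩ := ihr hszr hjr
          have hcr : (labs (node r1 r2)).all (fun x => decide (ℓ < x)) = false :=
            allBig_false_of_cut_small hszr hjr
          have hcutr : (labs (botCut (node r1 r2)).1).all (fun x => decide (ℓ < x)) = false := by
            rw [allBig_botCut hszr]; exact hcr
          cases hcl : (labs (node l1 l2)).all (fun x => decide (ℓ < x)) with
          | true =>
            have htr := trim_node_tt (r := node r1 r2) hcl
            refine ⟨?_, ?_, ?_⟩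
            · rw [htr, botCut_gl_false hg]; exact e1
            · rw [htr, botCut_gl_false hg, trim_node_tt hcl]; exact e2
            · rw [htr, botPos_gl_false hg, trimPos_node_tt hcl, e3]
          | false =>
            have h2r : 2 ≤ (labs (node r1 r2)).countP (fun x => !decide (ℓ < x)) :=
              countP_small_cut_ge hszr hjr
            have h1l : 1 ≤ (labs (node l1 l2)).countP (fun x => !decide (ℓ < x)) :=
              countP_small_pos hcl
            have h3 : 3 ≤ (labs (node l1 l2) ++ labs (node r1 r2)).countP
                (fun x => !decide (ℓ < x)) := by
              rw [List.countP_append]; omega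
            have hgf : goLeft (trim ℓ (node l1 l2)) (trim ℓ (node r1 r2)) = false := by
              rw [goLeft_trim hcl hcr h3]; exact hg
            obtain ⟨A, B, hAB⟩ := trim_node_of_two h2r hcr
            have htr := trim_node_ff (r := node r1 r2) hcl hcr
            have hcutT : botCut (node (trim ℓ (node l1 l2)) (trim ℓ (node r1 r2))) =
                (node (trim ℓ (node l1 l2)) (botCut (trim ℓ (node r1 r2))).1,
                  (botCut (trim ℓ (node r1 r2))).2) := by
              rw [hAB] at hgf ⊢
              exact botCut_gl_false hgf
            have hposT : botPos (node (trim ℓ (node l1 l2)) (trim ℓ (node r1 r2))) =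
                true :: botPos (trim ℓ (node r1 r2)) := by
              rw [hAB] at hgf ⊢
              exact botPos_gl_false hgf
            refine ⟨?_, ?_, ?_⟩
            · rw [htr, hcutT, botCut_gl_false hg]; exact e1
            · rw [htr, hcutT, botCut_gl_false hg]
              show node (trim ℓ (node l1 l2)) (botCut (trim ℓ (node r1 r2))).1 =
                trim ℓ (node (node l1 l2) (botCut (node r1 r2)).1)
              rw [trim_node_ff hcl hcutr, e2]
            · rw [htr, hposT, botPos_gl_false hg, trimPos_node_ff_true hcl hcr, e3]

end LTree

namespace LTree

theorem isBr_node_false {A B : LTree} {q : List Bool} : IsBr (node A B) (false :: q) ↔ IsBr A q := by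
  unfold IsBr
  simp [subAt]

theorem isBr_node_true {A B : LTree} {q : List Bool} : IsBr (node A B) (true :: q) ↔ IsBr B q := by
  unfold IsBr
  simp [subAt]

theorem trim_botCut_gt {ℓ : ℕ} : ∀ t : LTree, 1 ≤ size t → ℓ < (botCut t).2 →
    (labs t).all (fun x => decide (ℓ < x)) = false →
    trim ℓ (botCut t).1 = trim ℓ t := by
  intro t
  induction t with
  | leaf a => intro h; simp [size] at h
  | node l r ihl ihr =>
    intro _ hj hc
    have hc' : ((labs l).all (fun x => decide (ℓ < x)) = false) ∨
        ((labs r).all (fun x => decide (ℓ < x)) = false) := by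
      by_contra hcon
      push_neg at hcon
      obtain ⟨h1, h2⟩ := hcon
      simp only [ne_eq, Bool.not_eq_false] at h1 h2
      rw [labs, List.all_append, h1, h2] at hc
      simp at hc
    cases l with
    | leaf a =>
      cases r with
      | leaf b =>
        have hj' : ℓ < max a b := by simpa [botCut] using hj
        have hcut : (botCut (node (leaf a) (leaf b))).1 = leaf (min a b) := by simp [botCut]
        rw [hcut]
        by_cases ha : a ≤ ℓ
        · have hb : ℓ < b := by omega
          rw [trim_node_ft (by simp [labs]; omega) (by simp [labs]; omega)]
          rw [Nat.min_eq_left (by omega)]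
        · by_cases hb : b ≤ ℓ
          · rw [trim_node_tt (by simp [labs]; omega)]
            rw [Nat.min_eq_right (by omega)]
          · exfalso
            simp [labs] at hc
            omega
      | node r1 r2 =>
        have hg : goLeft (leaf a) (node r1 r2) = false := goLeft_eq_false_of_leaf_left _ _
        have hszr : 1 ≤ size (node r1 r2) := by simp [size]
        have hjr : ℓ < (botCut (node r1 r2)).2 := by
          rw [botCut_gl_false hg] at hj; exact hj
        have hcutr : (labs (botCut (node r1 r2)).1).all (fun x => decide (ℓ < x)) =
            (labs (node r1 r2)).all (fun x => decide (ℓ < x)) := allBig_botCut hszr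
        rw [botCut_gl_false hg]
        cases hca : (labs (leaf a)).all (fun x => decide (ℓ < x)) with
        | true =>
          rw [trim_node_tt hca, trim_node_tt hca]
          have hcr : (labs (node r1 r2)).all (fun x => decide (ℓ < x)) = false := by
            rcases hc' with h | h
            · rw [hca] at h; simp at h
            · exact h
          exact ihr hszr hjr hcr
        | false =>
          cases hcr : (labs (node r1 r2)).all (fun x => decide (ℓ < x)) with
          | true =>
            rw [trim_node_ft hca (hcutr.trans hcr), trim_node_ft hca hcr]
          | false =>
            rw [trim_node_ff hca (hcutr.trans hcr), trim_node_ff hca hcr,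
              ihr hszr hjr hcr]
    | node l1 l2 =>
      have hszl : 1 ≤ size (node l1 l2) := by simp [size]
      cases hg : goLeft (node l1 l2) r with
      | true =>
        have hjl : ℓ < (botCut (node l1 l2)).2 := by
          rw [botCut_gl_true hg] at hj; exact hj
        have hcutl : (labs (botCut (node l1 l2)).1).all (fun x => decide (ℓ < x)) =
            (labs (node l1 l2)).all (fun x => decide (ℓ < x)) := allBig_botCut hszl
        rw [botCut_gl_true hg]
        cases hcl : (labs (node l1 l2)).all (fun x => decide (ℓ < x)) with
        | true =>
          rw [trim_node_tt (hcutl.trans hcl), trim_node_tt hcl]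
        | false =>
          cases hcr : (labs r).all (fun x => decide (ℓ < x)) with
          | true =>
            rw [trim_node_ft (hcutl.trans hcl) hcr, trim_node_ft hcl hcr,
              ihl hszl hjl hcl]
          | false =>
            rw [trim_node_ff (hcutl.trans hcl) hcr, trim_node_ff hcl hcr,
              ihl hszl hjl hcl]
      | false =>
        have hr : ∃ r1 r2, r = node r1 r2 := by
          cases r with
          | leaf b => exact absurd hg (by simp [goLeft_eq_true_of_leaf_right])
          | node r1 r2 => exact ⟨r1, r2, rfl⟩
        obtain ⟨r1, r2, rfl⟩ := hr
        have hszr : 1 ≤ size (node r1 r2) := by simp [size]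
        have hjr : ℓ < (botCut (node r1 r2)).2 := by
          rw [botCut_gl_false hg] at hj; exact hj
        have hcutr : (labs (botCut (node r1 r2)).1).all (fun x => decide (ℓ < x)) =
            (labs (node r1 r2)).all (fun x => decide (ℓ < x)) := allBig_botCut hszr
        rw [botCut_gl_false hg]
        cases hcl : (labs (node l1 l2)).all (fun x => decide (ℓ < x)) with
        | true =>
          rw [trim_node_tt hcl, trim_node_tt hcl]
          have hcr : (labs (node r1 r2)).all (fun x => decide (ℓ < x)) = false := by
            rcases hc' with h | h
            · rw [hcl] at h; simp at h
            · exact h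
          exact ihr hszr hjr hcr
        | false =>
          cases hcr : (labs (node r1 r2)).all (fun x => decide (ℓ < x)) with
          | true =>
            rw [trim_node_ft hcl (hcutr.trans hcr), trim_node_ft hcl hcr]
          | false =>
            rw [trim_node_ff hcl (hcutr.trans hcr), trim_node_ff hcl hcr,
              ihr hszr hjr hcr]

theorem trimPos_botCut {ℓ : ℕ} : ∀ t : LTree, 1 ≤ size t → ∀ p : List Bool,
    IsBr (trim ℓ (botCut t).1) p →
    trimPos ℓ (botCut t).1 p = trimPos ℓ t p := by
  intro t
  induction t with
  | leaf a => intro h; simp [size] at h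
  | node l r ihl ihr =>
    intro _ p hp
    cases l with
    | leaf a =>
      cases r with
      | leaf b =>
        exfalso
        have hcut : (botCut (node (leaf a) (leaf b))).1 = leaf (min a b) := by simp [botCut]
        rw [hcut] at hp
        exact not_isBr_leaf _ _ (by simpa [trim] using hp)
      | node r1 r2 =>
        have hg : goLeft (leaf a) (node r1 r2) = false := goLeft_eq_false_of_leaf_left _ _
        have hszr : 1 ≤ size (node r1 r2) := by simp [size]
        have hcutr : (labs (botCut (node r1 r2)).1).all (fun x => decide (ℓ < x)) =
            (labs (node r1 r2)).all (fun x => decide (ℓ < x)) := allBig_botCut hszr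
        rw [botCut_gl_false hg] at hp ⊢
        cases hca : (labs (leaf a)).all (fun x => decide (ℓ < x)) with
        | true =>
          rw [trimPos_node_tt hca, trimPos_node_tt hca]
          rw [trim_node_tt hca] at hp
          rw [ihr hszr _ hp]
        | false =>
          cases hcr : (labs (node r1 r2)).all (fun x => decide (ℓ < x)) with
          | true =>
            rw [trimPos_node_ft hca (hcutr.trans hcr), trimPos_node_ft hca hcr]
          | false =>
            rw [trim_node_ff hca (hcutr.trans hcr)] at hp
            cases p with
            | nil =>
              rw [trimPos_node_ff_nil hca (hcutr.trans hcr), trimPos_node_ff_nil hca hcr]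
            | cons b q =>
              cases b with
              | false =>
                rw [trimPos_node_ff_false hca (hcutr.trans hcr), trimPos_node_ff_false hca hcr]
              | true =>
                rw [trimPos_node_ff_true hca (hcutr.trans hcr), trimPos_node_ff_true hca hcr]
                rw [isBr_node_true] at hp
                rw [ihr hszr _ hp]
    | node l1 l2 =>
      have hszl : 1 ≤ size (node l1 l2) := by simp [size]
      cases hg : goLeft (node l1 l2) r with
      | true =>
        have hcutl : (labs (botCut (node l1 l2)).1).all (fun x => decide (ℓ < x)) =
            (labs (node l1 l2)).all (fun x => decide (ℓ < x)) := allBig_botCut hszl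
        rw [botCut_gl_true hg] at hp ⊢
        cases hcl : (labs (node l1 l2)).all (fun x => decide (ℓ < x)) with
        | true =>
          rw [trimPos_node_tt (hcutl.trans hcl), trimPos_node_tt hcl]
        | false =>
          cases hcr : (labs r).all (fun x => decide (ℓ < x)) with
          | true =>
            rw [trimPos_node_ft (hcutl.trans hcl) hcr, trimPos_node_ft hcl hcr]
            rw [trim_node_ft (hcutl.trans hcl) hcr] at hp
            rw [ihl hszl _ hp]
          | false =>
            rw [trim_node_ff (hcutl.trans hcl) hcr] at hp
            cases p with
            | nil =>
              rw [trimPos_node_ff_nil (hcutl.trans hcl) hcr, trimPos_node_ff_nil hcl hcr]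
            | cons b q =>
              cases b with
              | false =>
                rw [trimPos_node_ff_false (hcutl.trans hcl) hcr, trimPos_node_ff_false hcl hcr]
                rw [isBr_node_false] at hp
                rw [ihl hszl _ hp]
              | true =>
                rw [trimPos_node_ff_true (hcutl.trans hcl) hcr, trimPos_node_ff_true hcl hcr]
      | false =>
        have hr : ∃ r1 r2, r = node r1 r2 := by
          cases r with
          | leaf b => exact absurd hg (by simp [goLeft_eq_true_of_leaf_right])
          | node r1 r2 => exact ⟨r1, r2, rfl⟩
        obtain ⟨r1, r2, rfl⟩ := hr
        have hszr : 1 ≤ size (node r1 r2) := by simp [size]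
        have hcutr : (labs (botCut (node r1 r2)).1).all (fun x => decide (ℓ < x)) =
            (labs (node r1 r2)).all (fun x => decide (ℓ < x)) := allBig_botCut hszr
        rw [botCut_gl_false hg] at hp ⊢
        cases hcl : (labs (node l1 l2)).all (fun x => decide (ℓ < x)) with
        | true =>
          rw [trimPos_node_tt hcl, trimPos_node_tt hcl]
          rw [trim_node_tt hcl] at hp
          rw [ihr hszr _ hp]
        | false =>
          cases hcr : (labs (node r1 r2)).all (fun x => decide (ℓ < x)) with
          | true =>
            rw [trimPos_node_ft hcl (hcutr.trans hcr), trimPos_node_ft hcl hcr]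
          | false =>
            rw [trim_node_ff hcl (hcutr.trans hcr)] at hp
            cases p with
            | nil =>
              rw [trimPos_node_ff_nil hcl (hcutr.trans hcr), trimPos_node_ff_nil hcl hcr]
            | cons b q =>
              cases b with
              | false =>
                rw [trimPos_node_ff_false hcl (hcutr.trans hcr), trimPos_node_ff_false hcl hcr]
              | true =>
                rw [trimPos_node_ff_true hcl (hcutr.trans hcr), trimPos_node_ff_true hcl hcr]
                rw [isBr_node_true] at hp
                rw [ihr hszr _ hp]

end LTree

namespace LTree

theorem countP_range_small (ℓ : ℕ) : ∀ m : ℕ,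
    (List.range m).countP (fun i => !decide (ℓ < i + 1)) = min m ℓ := by
  intro m
  induction m with
  | zero => simp
  | succ m ih =>
    rw [List.range_succ, List.countP_append, ih]
    simp only [List.countP_cons, List.countP_nil]
    by_cases h : ℓ < m + 1
    · rw [(show (!decide (ℓ < m + 1)) = false by simp [h])]
      simp only [Bool.false_eq_true, if_false]
      omega
    · rw [(show (!decide (ℓ < m + 1)) = true by simp; omega)]
      simp only [if_true]
      omega

theorem size_trim_isLab {n ℓ : ℕ} {t : LTree} (h : IsLab n t) (h1 : 1 ≤ ℓ)
    (hln : ℓ ≤ n + 1) :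
    size (trim ℓ t) + 1 = ℓ ∧ (labs t).all (fun x => decide (ℓ < x)) = false := by
  have h1mem : (1 : ℕ) ∈ labs t := (mem_labs_iff h).mpr ⟨le_refl _, by omega⟩
  have hcond : (labs t).all (fun x => decide (ℓ < x)) = false := by
    rw [List.all_eq_false]
    exact ⟨1, h1mem, by simp; omega⟩
  refine ⟨?_, hcond⟩
  have hlabs := labs_trim hcond
  have hlen := length_labs (trim ℓ t)
  rw [hlabs] at hlen
  rw [← List.countP_eq_length_filter] at hlen
  have hcount : (labs t).countP (fun x => !decide (ℓ < x)) =
      (((List.range (n + 1)).map (· + 1)).countP (fun x => !decide (ℓ < x))) :=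
    h.2.countP_eq _
  rw [List.countP_map] at hcount
  have := countP_range_small ℓ (n + 1)
  have heq : ((List.range (n+1)).countP ((fun x => !decide (ℓ < x)) ∘ (· + 1))) =
      ((List.range (n+1)).countP (fun i => !decide (ℓ < i + 1))) := by
    apply List.countP_congr
    intro a _
    rfl
  omega

theorem mainC : ∀ n : ℕ, ∀ t : LTree, ∀ ℓ : ℕ, IsLab n t → 2 ≤ ℓ → ℓ ≤ n + 1 →
    List.Sublist ((eraseList (ℓ - 1) (trim ℓ t)).map (trimPos ℓ t)) (eraseList n t) := by
  intro n
  induction n using Nat.strong_induction_on with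
  | _ n ih =>
    intro t ℓ h hl2 hln
    have hn1 : 1 ≤ n := by omega
    have ht1 : 1 ≤ size t := by rw [h.1]; omega
    have hnodup : (labs t).Nodup := nodup_labs h
    have hjmem : (botCut t).2 ∈ labs t := botLabel_mem ht1
    have hjb : 1 ≤ (botCut t).2 ∧ (botCut t).2 ≤ n + 1 := (mem_labs_iff h).mp hjmem
    have hjnotin : (botCut t).2 ∉ labs (botCut t).1 := by
      intro hmem
      have : (botCut t).2 ∈ (labs t).erase (botCut t).2 :=
        (labs_botCut_perm ht1).mem_iff.mp hmem
      rw [List.Nodup.mem_erase_iff hnodup] at this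
      exact this.1 rfl
    have hIsLab' : IsLab (n - 1) (botErase t) := isLab_botErase h hn1
    obtain ⟨hszTrim, hcond⟩ := size_trim_isLab h (by omega) hln
    -- unfold the first erasure of t
    obtain ⟨m, rfl⟩ : ∃ m, n = m + 1 := ⟨n - 1, by omega⟩
    rw [show eraseList (m + 1) t = botPos t :: eraseList m (botErase t) from rfl]
    by_cases hcase : (botCut t).2 ≤ ℓ
    · -- Case B : the cut is a span node
      obtain ⟨e1, e2, e3⟩ := coreB t ht1 hcase
      rw [show ℓ - 1 = (ℓ - 2) + 1 from by omega]
      rw [show eraseList ((ℓ - 2) + 1) (trim ℓ t) =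
        botPos (trim ℓ t) :: eraseList (ℓ - 2) (botErase (trim ℓ t)) from rfl]
      rw [List.map_cons, e3]
      apply List.Sublist.cons₂
      by_cases hl3 : ℓ ≤ 2
      · rw [show ℓ - 2 = 0 from by omega]
        rw [show eraseList 0 (botErase (trim ℓ t)) = [] from rfl]
        simp
      · -- ℓ ≥ 3
        have hBE : botErase (trim ℓ t) = relabel (botCut t).2 (trim ℓ (botCut t).1) := by
          rw [botErase, e1, e2]
        have hTree : botErase (trim ℓ t) = trim (ℓ - 1) (botErase t) := by
          rw [hBE, botErase, trim_relabel_le hcase hjb.1 hjnotin]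
        have hszBE : size (botErase (trim ℓ t)) = ℓ - 2 := by
          have hst : 1 ≤ size (trim ℓ t) := by omega
          have := size_botErase hst
          omega
        have hmapeq : (eraseList (ℓ - 2) (botErase (trim ℓ t))).map (trimPos ℓ t) =
            (eraseList ((ℓ - 1) - 1) (trim (ℓ - 1) (botErase t))).map
              (trimPos (ℓ - 1) (botErase t)) := by
          rw [show (ℓ - 1) - 1 = ℓ - 2 from by omega, ← hTree]
          apply List.map_congr_left
          intro q hq
          have hbr : IsBr (botErase (trim ℓ t)) q :=
            isBr_eraseList (by omega) q hq
          rw [hBE] at hbr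
          have hbr' : IsBr (trim ℓ (botCut t).1) q := isBr_relabel.mp hbr
          have step1 : trimPos ℓ (botCut t).1 q = trimPos ℓ t q :=
            trimPos_botCut t ht1 q hbr'
          have step2 : trimPos (ℓ - 1) (botErase t) q = trimPos ℓ (botCut t).1 q := by
            rw [botErase]
            exact trimPos_relabel_le hcase hjb.1 hjnotin q
          rw [step2, step1]
        rw [hmapeq]
        have hIH := ih m (by omega) (botErase t) (ℓ - 1)
          (by simpa using hIsLab') (by omega) (by omega)
        simpa using hIH
    · -- Case A : the cut is outside the span
      push_neg at hcase
      apply List.Sublist.cons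
      have hA1 : trim ℓ (botCut t).1 = trim ℓ t := trim_botCut_gt t ht1 hcase hcond
      have hT2 : trim ℓ (botErase t) = trim ℓ t := by
        rw [botErase, trim_relabel_gt hcase hjnotin, hA1]
        apply relabel_eq_self
        intro a ha
        have := labs_trim_le hcond a ha
        omega
      have hmapeq : (eraseList (ℓ - 1) (trim ℓ t)).map (trimPos ℓ t) =
          (eraseList (ℓ - 1) (trim ℓ (botErase t))).map (trimPos ℓ (botErase t)) := by
        rw [hT2]
        apply List.map_congr_left
        intro q hq
        have hbr : IsBr (trim ℓ t) q := isBr_eraseList (by omega) q hq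
        have hbr' : IsBr (trim ℓ (botCut t).1) q := by rw [hA1]; exact hbr
        have step1 : trimPos ℓ (botCut t).1 q = trimPos ℓ t q :=
          trimPos_botCut t ht1 q hbr'
        have step2 : trimPos ℓ (botErase t) q = trimPos ℓ (botCut t).1 q := by
          rw [botErase]
          exact trimPos_relabel_gt hcase hjnotin q
        rw [step2, step1]
      rw [hmapeq]
      have hIH := ih m (by omega) (botErase t) ℓ
        (by simpa using hIsLab') hl2 (by omega)
      exact hIH

end LTree

namespace LTree

theorem idxOf_cons_ne' {α : Type*} [BEq α] [LawfulBEq α] {a b : α} (l : List α)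
    (h : b ≠ a) : (b :: l).idxOf a = l.idxOf a + 1 := by
  rw [List.idxOf_cons]
  rw [show (b == a) = false from beq_eq_false_iff_ne.mpr h]
  rfl

theorem idxOf_cons_self' {α : Type*} [BEq α] [LawfulBEq α] (a : α) (l : List α) :
    (a :: l).idxOf a = 0 := by
  rw [List.idxOf_cons]
  simp

theorem sublist_pairwise_idxOf {α : Type*} [BEq α] [LawfulBEq α] {L' L : List α}
    (h : L'.Sublist L) (hN : L.Nodup) :
    L'.Pairwise (fun a b => L.idxOf a < L.idxOf b) := by
  induction h with
  | slnil => exact List.Pairwise.nil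
  | @cons L' L a hsub ihs =>
    rw [List.nodup_cons] at hN
    have ihp := ihs hN.2
    apply ihp.imp_of_mem
    intro x y hx hy hxy
    have hxa : a ≠ x := fun he => hN.1 (he ▸ hsub.subset hx)
    have hya : a ≠ y := fun he => hN.1 (he ▸ hsub.subset hy)
    rw [idxOf_cons_ne' _ hxa, idxOf_cons_ne' _ hya]
    omega
  | @cons_cons L' L a hsub ihs =>
    rw [List.nodup_cons] at hN
    have ihp := ihs hN.2
    rw [List.pairwise_cons]
    constructor
    · intro b hb
      have hba : a ≠ b := fun he => hN.1 (he ▸ hsub.subset hb)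
      rw [idxOf_cons_self' _ _, idxOf_cons_ne' _ hba]
      omega
    · apply ihp.imp_of_mem
      intro x y hx hy hxy
      have hxa : a ≠ x := fun he => hN.1 (he ▸ hsub.subset hx)
      have hya : a ≠ y := fun he => hN.1 (he ▸ hsub.subset hy)
      rw [idxOf_cons_ne' _ hxa, idxOf_cons_ne' _ hya]
      omega

end LTree


/-- **Compatibility.** Let `t` be a labeled binary tree of size `n`
and, for `2 ≤ ℓ ≤ n`, let `trim ℓ t` be the (contracted) subtree spanned by the
leaves labeled `0,…,ℓ`. List the branching nodes of the span in their order of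
removal under iterated best-of-three erasure of the span, as positions in `t`
(via `trimPos`); and list all branching nodes of `t` in their removal order under
iterated best-of-three erasure of `t` (`eraseList n t`). Then the former order is
compatible with the latter: consecutive span branch points `b_i^ℓ ≺ b_{i+1}^ℓ`
are also ordered by `≺_t`. -/
theorem span_erasure_order_compatible (n ℓ : ℕ) (t : LTree) (h : LTree.IsLab n t)
    (hℓ : 2 ≤ ℓ) (hℓn : ℓ ≤ n) :
    ∀ i : ℕ, i + 1 < ℓ - 1 →
      (LTree.eraseList n t).idxOf
          (((LTree.eraseList (ℓ - 1) (LTree.trim ℓ t)).map (LTree.trimPos ℓ t)).getD i []) <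
        (LTree.eraseList n t).idxOf
          (((LTree.eraseList (ℓ - 1) (LTree.trim ℓ t)).map (LTree.trimPos ℓ t)).getD (i + 1) []) := by
  intro i hi
  set L := LTree.eraseList n t with hL
  set L' := (LTree.eraseList (ℓ - 1) (LTree.trim ℓ t)).map (LTree.trimPos ℓ t) with hL'
  have hlen : L'.length = ℓ - 1 := by
    rw [hL', List.length_map, LTree.length_eraseList]
  have hsub : L'.Sublist L := LTree.mainC n t ℓ h hℓ (by omega)
  have hnodupL : L.Nodup := LTree.nodup_eraseList (le_of_eq h.1.symm)
  have hpw := LTree.sublist_pairwise_idxOf hsub hnodupL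
  have hi1 : i < L'.length := by omega
  have hi2 : i + 1 < L'.length := by omega
  rw [List.getD_eq_getElem L' [] hi1, List.getD_eq_getElem L' [] hi2]
  have := List.pairwise_iff_get.mp hpw ⟨i, hi1⟩ ⟨i + 1, hi2⟩ (by simp)
  simpa using this
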